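/- There is an absolute constant C > 0 with the following property. Let ν, κ, β > 0, let η be real and l a nonzero integer, and set q := η² + l². Suppose w, v, θ : ℝ → ℂ are differentiable and satisfy for all t ≥ 0: w'(t) = β·(η·l/q)·θ(t) − ν·q·w(t), v'(t) = −β·(l²/q)·θ(t) − ν·q·v(t), and θ'(t) = β·v(t) − κ·q·θ(t). Then for every t ≥ 0: |w(t)| ≤ C·exp(−min(ν,κ)·q·t)·( |w(0)| + (|η|/|l|)·|v(0)| + (|η|/√q)·|θ(0)| ). -/

import Mathlib

open RealInnerProductSpace

lemma mono_aux {f f' : ℝ → ℝ} (hf : ∀ t, 0 ≤ t → HasDerivAt f (f' t) t)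
    (h' : ∀ t, 0 ≤ t → f' t ≤ 0) {t : ℝ} (ht : 0 ≤ t) : f t ≤ f 0 := by
  have h := antitoneOn_of_deriv_nonpos (convex_Ici (0:ℝ))
    (fun x hx => (hf x hx).continuousAt.continuousWithinAt)
    (fun x hx => by
      rw [interior_Ici] at hx
      exact ((hf x hx.le).differentiableAt.differentiableWithinAt))
    (fun x hx => by
      rw [interior_Ici] at hx
      rw [(hf x hx.le).deriv]; exact h' x hx.le)
  exact h Set.self_mem_Ici ht ht

lemma energy_bound {c : ℝ} {E E' : ℝ → ℝ} (hE : ∀ t, 0 ≤ t → HasDerivAt E (E' t) t)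
    (hE' : ∀ t, 0 ≤ t → c * E t + E' t ≤ 0) {t : ℝ} (ht : 0 ≤ t) :
    E t ≤ Real.exp (-(c * t)) * E 0 := by
  have hG : ∀ s, 0 ≤ s → HasDerivAt (fun s => Real.exp (c * s) * E s)
      (c * Real.exp (c * s) * E s + Real.exp (c * s) * E' s) s := by
    intro s hs
    have hexp : HasDerivAt (fun s : ℝ => Real.exp (c * s)) (c * Real.exp (c * s)) s := by
      simpa [mul_comm] using
        ((hasDerivAt_id s).const_mul c).exp
    exact hexp.mul (hE s hs)
  have hG' : ∀ s, 0 ≤ s → c * Real.exp (c * s) * E s + Real.exp (c * s) * E' s ≤ 0 := by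
    intro s hs
    have := hE' s hs
    nlinarith [Real.exp_pos (c * s),
      mul_nonpos_of_nonneg_of_nonpos (Real.exp_nonneg (c*s)) this]
  have := mono_aux hG hG' ht
  simp only [mul_zero, Real.exp_zero, one_mul] at this
  calc E t = Real.exp (-(c*t)) * (Real.exp (c*t) * E t) := by
        rw [← mul_assoc, ← Real.exp_add]; simp
    _ ≤ Real.exp (-(c*t)) * E 0 := mul_le_mul_of_nonneg_left this (Real.exp_nonneg _)

lemma inner_coe_mul_right (r : ℝ) (z w : ℂ) : ⟪z, (r:ℂ) * w⟫ = r * ⟪z, w⟫ := by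
  rw [← Complex.real_smul, real_inner_smul_right]

lemma inner_coe_mul_left (r : ℝ) (z w : ℂ) : ⟪(r:ℂ) * z, w⟫ = r * ⟪z, w⟫ := by
  rw [← Complex.real_smul, real_inner_smul_left]

lemma exp_sq (a : ℝ) : Real.exp a ^ 2 = Real.exp (2 * a) := by
  rw [sq, ← Real.exp_add, two_mul]

lemma abs_le_of_sq_le {x y : ℝ} (hx : 0 ≤ x) (hy : 0 ≤ y) (h : x ^ 2 ≤ y ^ 2) : x ≤ y := by
  nlinarith

lemma inner_self_abs (z : ℂ) : ⟪z, z⟫ = ‖z‖ ^ 2 := by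
  rw [real_inner_self_eq_norm_sq]

set_option maxHeartbeats 1000000 in
theorem spanwise_streak_decay :
    ∃ C : ℝ, 0 < C ∧
      ∀ (ν κ β η : ℝ) (l : ℤ), 0 < ν → 0 < κ → 0 < β → l ≠ 0 →
        ∀ (q : ℝ), q = η ^ 2 + (l:ℝ) ^ 2 →
          ∀ (w v θ : ℝ → ℂ),
            (∀ t, 0 ≤ t → HasDerivAt w
              (((β * (η * (l:ℝ) / q) : ℝ) : ℂ) * θ t - ((ν * q : ℝ) : ℂ) * w t) t) →
            (∀ t, 0 ≤ t → HasDerivAt v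
              (-((β * ((l:ℝ) ^ 2 / q) : ℝ) : ℂ) * θ t - ((ν * q : ℝ) : ℂ) * v t) t) →
            (∀ t, 0 ≤ t → HasDerivAt θ
              (((β : ℝ) : ℂ) * v t - ((κ * q : ℝ) : ℂ) * θ t) t) →
            ∀ t, 0 ≤ t →
              ‖w t‖ ≤
                C * Real.exp (-(min ν κ) * q * t) *
                  (‖w 0‖ + (|η| / |(l:ℝ)|) * ‖v 0‖
                    + (|η| / Real.sqrt q) * ‖θ 0‖) := by
  refine ⟨2, by norm_num, ?_⟩
  intro ν κ β η l hν hκ hβ hl q hq w v θ hw hv hθ t ht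
  have hlR : ((l:ℝ)) ≠ 0 := Int.cast_ne_zero.mpr hl
  have hl2 : (0:ℝ) < (l:ℝ)^2 := by positivity
  have hq0 : 0 < q := by rw [hq]; positivity
  set m := min ν κ with hm
  have hm0 : 0 < m := lt_min hν hκ
  have hmν : m ≤ ν := min_le_left _ _
  have hmκ : m ≤ κ := min_le_right _ _
  set r : ℝ := (l:ℝ)^2 / q with hrdef
  have hr0 : 0 < r := div_pos hl2 hq0
  have hrq : r * q = (l:ℝ)^2 := div_mul_cancel₀ _ hq0.ne'
  -- derivative expressions
  set dv : ℝ → ℂ := fun s => -((β * r : ℝ) : ℂ) * θ s - ((ν * q : ℝ) : ℂ) * v s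
    with hdv
  set dθ : ℝ → ℂ := fun s => ((β : ℝ) : ℂ) * v s - ((κ * q : ℝ) : ℂ) * θ s with hdθ
  -- energy for (v, θ)
  set E : ℝ → ℝ := fun s => ⟪v s, v s⟫ + r * ⟪θ s, θ s⟫ with hE
  set E' : ℝ → ℝ := fun s =>
    (⟪v s, dv s⟫ + ⟪dv s, v s⟫) + r * (⟪θ s, dθ s⟫ + ⟪dθ s, θ s⟫) with hE'
  have hEderiv : ∀ s, 0 ≤ s → HasDerivAt E (E' s) s := fun s hs =>
    ((hv s hs).inner ℝ (hv s hs)).add (((hθ s hs).inner ℝ (hθ s hs)).const_mul r)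
  have key : ∀ s, 0 ≤ s → (2*m*q) * E s + E' s ≤ 0 := by
    intro s hs
    have hcomm : ⟪θ s, v s⟫ = ⟪v s, θ s⟫ := real_inner_comm _ _
    have ha : (0:ℝ) ≤ ⟪v s, v s⟫ := real_inner_self_nonneg
    have hb : (0:ℝ) ≤ ⟪θ s, θ s⟫ := real_inner_self_nonneg
    simp only [hE, hE', hdv, hdθ, inner_sub_right, inner_sub_left, neg_mul,
      inner_neg_right, inner_neg_left, inner_coe_mul_right, inner_coe_mul_left, hcomm]
    have h1 : 0 ≤ q * (ν - m) * ⟪v s, v s⟫ :=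
      mul_nonneg (mul_nonneg hq0.le (by linarith)) ha
    have h2 : 0 ≤ (r * q) * (κ - m) * ⟪θ s, θ s⟫ :=
      mul_nonneg (mul_nonneg (by positivity) (by linarith)) hb
    nlinarith [h1, h2]
  have hEbound : E t ≤ Real.exp (-(2*m*q*t)) * E 0 := energy_bound hEderiv key ht
  -- bound on |v t|
  have hs2 : (|(l:ℝ)| / Real.sqrt q)^2 = r := by
    rw [div_pow, sq_abs, Real.sq_sqrt hq0.le, hrdef]
  have hvt : ‖v t‖ ≤
      Real.exp (-(m*q*t)) * (‖v 0‖ + (|(l:ℝ)| / Real.sqrt q) * ‖θ 0‖) := by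
    have hexp2 : Real.exp (-(m*q*t))^2 = Real.exp (-(2*m*q*t)) := by
      rw [exp_sq]; ring_nf
    have hle : ‖v t‖ ^ 2 ≤ Real.exp (-(2*m*q*t)) * E 0 := by
      have h3 : ‖v t‖ ^ 2 ≤ E t := by
        simp only [hE, ← inner_self_abs]
        nlinarith [real_inner_self_nonneg (x := θ t), hr0]
      linarith
    have hE0 : E 0 = ‖v 0‖^2 + r * ‖θ 0‖^2 := by
      simp only [hE, inner_self_abs]
    have hexpand : (‖v 0‖ + (|(l:ℝ)| / Real.sqrt q) * ‖θ 0‖)^2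
        = ‖v 0‖^2 + r * ‖θ 0‖^2
          + 2 * ‖v 0‖ * ((|(l:ℝ)| / Real.sqrt q) * ‖θ 0‖) := by
      rw [← hs2]; ring
    have hsq : ‖v t‖ ^ 2 ≤
        (Real.exp (-(m*q*t)) * (‖v 0‖ + (|(l:ℝ)| / Real.sqrt q) * ‖θ 0‖))^2 := by
      calc ‖v t‖ ^ 2 ≤ Real.exp (-(2*m*q*t)) * E 0 := hle
        _ ≤ Real.exp (-(2*m*q*t)) * E 0
            + Real.exp (-(2*m*q*t)) * (2 * ‖v 0‖ * ((|(l:ℝ)| / Real.sqrt q) * ‖θ 0‖)) := by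
            have : (0:ℝ) ≤ Real.exp (-(2*m*q*t)) * (2 * ‖v 0‖ * ((|(l:ℝ)| / Real.sqrt q) * ‖θ 0‖)) := by
              positivity
            linarith
        _ = (Real.exp (-(m*q*t)) * (‖v 0‖ + (|(l:ℝ)| / Real.sqrt q) * ‖θ 0‖))^2 := by
            rw [mul_pow, hexp2, hexpand, hE0]; ring
    exact abs_le_of_sq_le (norm_nonneg _) (by positivity) hsq
  -- the combination W = w + (η/l) v
  set W : ℝ → ℂ := fun s => w s + ((η / (l:ℝ) : ℝ) : ℂ) * v s with hWdef
  have hW : ∀ s, 0 ≤ s → HasDerivAt W (-((ν*q : ℝ) : ℂ) * W s) s := by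
    intro s hs
    have h := (hw s hs).add ((hv s hs).const_mul ((η / (l:ℝ) : ℝ) : ℂ))
    have hc2 : (((η / (l:ℝ)) : ℝ) : ℂ) * ((β * r : ℝ) : ℂ) = ((β * (η * (l:ℝ) / q) : ℝ) : ℂ) := by
      rw [← Complex.ofReal_mul]
      congr 1
      rw [hrdef]
      field_simp
    refine HasDerivAt.congr_deriv h ?_
    linear_combination (-(θ s)) * hc2
  -- energy for W
  set F : ℝ → ℝ := fun s => ⟪W s, W s⟫ with hF
  set F' : ℝ → ℝ := fun s => ⟪W s, -((ν*q : ℝ) : ℂ) * W s⟫ + ⟪-((ν*q : ℝ) : ℂ) * W s, W s⟫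
    with hF'
  have hFderiv : ∀ s, 0 ≤ s → HasDerivAt F (F' s) s := fun s hs =>
    (hW s hs).inner ℝ (hW s hs)
  have keyF : ∀ s, 0 ≤ s → (2*ν*q) * F s + F' s ≤ 0 := by
    intro s hs
    simp only [hF, hF', neg_mul, inner_neg_right, inner_neg_left,
      inner_coe_mul_right, inner_coe_mul_left]
    nlinarith [real_inner_self_nonneg (x := W s)]
  have hFbound : F t ≤ Real.exp (-(2*ν*q*t)) * F 0 := energy_bound hFderiv keyF ht
  have hWt : ‖W t‖ ≤ Real.exp (-(ν*q*t)) * ‖W 0‖ := by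
    have hexp2 : Real.exp (-(ν*q*t))^2 = Real.exp (-(2*ν*q*t)) := by
      rw [exp_sq]; ring_nf
    have hsq : ‖W t‖^2 ≤ (Real.exp (-(ν*q*t)) * ‖W 0‖)^2 := by
      have h1 : F t = ‖W t‖^2 := by simp only [hF, inner_self_abs]
      have h0 : F 0 = ‖W 0‖^2 := by simp only [hF, inner_self_abs]
      rw [h1, h0] at hFbound
      rw [mul_pow, hexp2]
      exact hFbound
    exact abs_le_of_sq_le (norm_nonneg _) (by positivity) hsq
  -- combine
  have hwt : ‖w t‖ ≤ ‖W t‖ + (|η| / |(l:ℝ)|) * ‖v t‖ := by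
    have hws : w t = W t - ((η / (l:ℝ) : ℝ) : ℂ) * v t := by
      simp only [hWdef]; ring
    rw [hws]
    calc ‖W t - ((η / (l:ℝ) : ℝ) : ℂ) * v t‖
        ≤ ‖W t‖ + ‖((η / (l:ℝ) : ℝ) : ℂ) * v t‖ :=
          norm_sub_le _ _
      _ = ‖W t‖ + (|η| / |(l:ℝ)|) * ‖v t‖ := by
          rw [norm_mul, Complex.norm_real, Real.norm_eq_abs, abs_div]
  have hW0 : ‖W 0‖ ≤ ‖w 0‖ + (|η| / |(l:ℝ)|) * ‖v 0‖ := by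
    simp only [hWdef]
    calc ‖w 0 + ((η / (l:ℝ) : ℝ) : ℂ) * v 0‖
        ≤ ‖w 0‖ + ‖((η / (l:ℝ) : ℝ) : ℂ) * v 0‖ :=
          norm_add_le _ _
      _ = ‖w 0‖ + (|η| / |(l:ℝ)|) * ‖v 0‖ := by
          rw [norm_mul, Complex.norm_real, Real.norm_eq_abs, abs_div]
  clear_value m r dv dθ E E' W F F'
  have hexple : Real.exp (-(ν*q*t)) ≤ Real.exp (-(m*q*t)) := by
    apply Real.exp_le_exp.mpr
    nlinarith [mul_nonneg (mul_nonneg (sub_nonneg.2 hmν) hq0.le) ht]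
  have hfrac : (|η| / |(l:ℝ)|) * (|(l:ℝ)| / Real.sqrt q) = |η| / Real.sqrt q := by
    have : |(l:ℝ)| ≠ 0 := abs_ne_zero.mpr hlR
    field_simp
  have hexp_eq : Real.exp (-m * q * t) = Real.exp (-(m*q*t)) := by
    congr 1; ring
  rw [hexp_eq]
  have hP0 : 0 < Real.exp (-(m*q*t)) := Real.exp_pos _
  have hA : 0 ≤ ‖w 0‖ := norm_nonneg _
  have hB : 0 ≤ (|η| / |(l:ℝ)|) * ‖v 0‖ := by positivity
  have hD : 0 ≤ (|η| / Real.sqrt q) * ‖θ 0‖ := by positivity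
  set P := Real.exp (-(m*q*t)) with hP
  set A := ‖w 0‖ with hAdef
  set B := (|η| / |(l:ℝ)|) * ‖v 0‖ with hBdef
  set D := (|η| / Real.sqrt q) * ‖θ 0‖ with hDdef
  clear_value P A B D
  have step1 : ‖W t‖ ≤ P * (A + B) :=
    hWt.trans (by
      calc Real.exp (-(ν*q*t)) * ‖W 0‖
          ≤ P * ‖W 0‖ :=
            mul_le_mul_of_nonneg_right hexple (norm_nonneg _)
        _ ≤ P * (A + B) := mul_le_mul_of_nonneg_left hW0 hP0.le)
  have step2 : (|η| / |(l:ℝ)|) * ‖v t‖ ≤ P * (B + D) := by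
    have hηl : (0:ℝ) ≤ |η| / |(l:ℝ)| := by positivity
    have := mul_le_mul_of_nonneg_left hvt hηl
    calc (|η| / |(l:ℝ)|) * ‖v t‖
        ≤ (|η| / |(l:ℝ)|) * (P * (‖v 0‖ + (|(l:ℝ)| / Real.sqrt q) * ‖θ 0‖)) := this
      _ = P * ((|η| / |(l:ℝ)|) * ‖v 0‖
            + ((|η| / |(l:ℝ)|) * (|(l:ℝ)| / Real.sqrt q)) * ‖θ 0‖) := by ring
      _ = P * (B + D) := by rw [hfrac, ← hBdef, ← hDdef]
  calc ‖w t‖ ≤ ‖W t‖ + (|η| / |(l:ℝ)|) * ‖v t‖ := hwt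
    _ ≤ P * (A + B) + P * (B + D) := add_le_add step1 step2
    _ ≤ 2 * P * (A + B + D) := by nlinarith [mul_nonneg hP0.le hA, mul_nonneg hP0.le hD]
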